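/- For a single player (n = 1), the set of allocation choice functions truthfully implementable in F-Bayes-Nash equilibrium by direct mediated mechanisms equals the convex hull of the set Π_1(F) of F-incentive-compatible functions; moreover, by Carathéodory's theorem, any such f is implementable by a direct mediated mechanism whose message set has at most |Θ_1| × |A| elements. -/
import Mathlib

open Finset

/-- For a single player, the set of allocation choice functions truthfully implementable in
`F`-Bayes-Nash equilibrium by direct mediated mechanisms equals the convex hull of the set
`Π₁(F)` of `F`-incentive-compatible functions; moreover any member of this convex hull is
implementable with a message set of cardinality at most `|Θ| · |A|`. -/
theorem single_player_mediated_implementable_eq_convex_hull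
    {Θ A : Type} [Fintype Θ] [Fintype A]
    (F : Θ → ℝ) (hF0 : ∀ t, 0 ≤ F t) (hF1 : ∑ t, F t = 1)
    (W : Θ → (A → ℝ) → ℝ) :
    {f : Θ → A → ℝ |
        ∃ (N : ℕ) (D : Fin N → ℝ) (hd : Fin N → Θ → A → ℝ),
          (∀ φ, 0 ≤ D φ) ∧ (∑ φ, D φ = 1) ∧
          (∀ φ t, (∀ a, 0 ≤ hd φ t a) ∧ ∑ a, hd φ t a = 1) ∧
          (∀ φ, 0 < D φ → ∀ t, 0 < F t → ∀ t', W t (hd φ t') ≤ W t (hd φ t)) ∧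
          (∀ t a, f t a = ∑ φ, D φ * hd φ t a)}
      = convexHull ℝ {π : Θ → A → ℝ |
          (∀ t, (∀ a, 0 ≤ π t a) ∧ ∑ a, π t a = 1) ∧
          ∀ t, 0 < F t → ∀ t', W t (π t') ≤ W t (π t)} ∧
    ∀ f ∈ convexHull ℝ {π : Θ → A → ℝ |
          (∀ t, (∀ a, 0 ≤ π t a) ∧ ∑ a, π t a = 1) ∧
          ∀ t, 0 < F t → ∀ t', W t (π t') ≤ W t (π t)},
      ∃ (N : ℕ) (D : Fin N → ℝ) (hd : Fin N → Θ → A → ℝ),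
        N ≤ Fintype.card Θ * Fintype.card A ∧
        (∀ φ, 0 ≤ D φ) ∧ (∑ φ, D φ = 1) ∧
        (∀ φ t, (∀ a, 0 ≤ hd φ t a) ∧ ∑ a, hd φ t a = 1) ∧
        (∀ φ, 0 < D φ → ∀ t, 0 < F t → ∀ t', W t (hd φ t') ≤ W t (hd φ t)) ∧
        (∀ t a, f t a = ∑ φ, D φ * hd φ t a) := by
  classical
  set S : Set (Θ → A → ℝ) := {π : Θ → A → ℝ |
      (∀ t, (∀ a, 0 ≤ π t a) ∧ ∑ a, π t a = 1) ∧
      ∀ t, 0 < F t → ∀ t', W t (π t') ≤ W t (π t)} with hSdef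
  have hΘ : Nonempty Θ := by
    by_contra h
    rw [not_nonempty_iff] at h
    rw [Finset.univ_eq_empty, Finset.sum_empty] at hF1
    exact one_ne_zero hF1.symm
  -- the key claim with the Carathéodory bound
  have key : ∀ f ∈ convexHull ℝ S,
      ∃ (N : ℕ) (D : Fin N → ℝ) (hd : Fin N → Θ → A → ℝ),
        N ≤ Fintype.card Θ * Fintype.card A ∧
        (∀ φ, 0 ≤ D φ) ∧ (∑ φ, D φ = 1) ∧
        (∀ φ t, (∀ a, 0 ≤ hd φ t a) ∧ ∑ a, hd φ t a = 1) ∧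
        (∀ φ, 0 < D φ → ∀ t, 0 < F t → ∀ t', W t (hd φ t') ≤ W t (hd φ t)) ∧
        (∀ t a, f t a = ∑ φ, D φ * hd φ t a) := by
    intro f hf
    obtain ⟨ι, hι, z, w, hzS, hz_ai, hw_pos, hw_sum, hzw⟩ :=
      eq_pos_convex_span_of_mem_convexHull hf
    have hιne : Nonempty ι := by
      by_contra h
      rw [not_nonempty_iff] at h
      rw [Finset.univ_eq_empty, Finset.sum_empty] at hw_sum
      exact one_ne_zero hw_sum.symm
    obtain ⟨i₀⟩ := hιne
    haveI : Nonempty ι := ⟨i₀⟩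
    have hz_mem : ∀ i, z i ∈ S := fun i => hzS (Set.mem_range_self i)
    have hA : Nonempty A := by
      by_contra h
      rw [not_nonempty_iff] at h
      have h1 := ((hz_mem i₀).1 (Classical.arbitrary Θ)).2
      rw [Finset.univ_eq_empty, Finset.sum_empty] at h1
      exact one_ne_zero h1.symm
    -- the linear functional summing all entries
    let L : (Θ → A → ℝ) →ₗ[ℝ] ℝ :=
      { toFun := fun x => ∑ t, ∑ a, x t a
        map_add' := by intro x y; simp [Finset.sum_add_distrib]
        map_smul' := by intro c x; simp [Finset.mul_sum] }
    have hLz : ∀ i, L (z i) = (Fintype.card Θ : ℝ) := by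
      intro i
      have : ∀ t, ∑ a, z i t a = 1 := fun t => ((hz_mem i).1 t).2
      simp only [L, LinearMap.coe_mk, AddHom.coe_mk]
      simp [this, Finset.card_univ]
    have hspan : vectorSpan ℝ (Set.range z) ≤ LinearMap.ker L := by
      rw [vectorSpan_def, Submodule.span_le]
      rintro v hv
      rw [Set.mem_vsub] at hv
      obtain ⟨x, hx, y, hy, rfl⟩ := hv
      obtain ⟨i, rfl⟩ := hx
      obtain ⟨j, rfl⟩ := hy
      simp only [SetLike.mem_coe, LinearMap.mem_ker, vsub_eq_sub, map_sub, hLz, sub_self]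
    have hdim : Module.finrank ℝ (Θ → A → ℝ) = Fintype.card Θ * Fintype.card A := by
      rw [Module.finrank_pi_fintype]
      simp [Module.finrank_pi]
    have hLne : L ≠ 0 := by
      intro h
      have h1 : L (fun _ _ => (1 : ℝ)) = (Fintype.card Θ : ℝ) * (Fintype.card A : ℝ) := by
        simp [L, Finset.card_univ]
      rw [h] at h1
      simp only [LinearMap.zero_apply] at h1
      have : (0:ℝ) < (Fintype.card Θ : ℝ) * (Fintype.card A : ℝ) := by
        have := Fintype.card_pos (α := Θ)
        have := Fintype.card_pos (α := A)
        positivity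
      rw [← h1] at this
      exact lt_irrefl _ this
    have hker : Module.finrank ℝ (LinearMap.ker L) + 1 = Fintype.card Θ * Fintype.card A := by
      have hr : Module.finrank ℝ (LinearMap.range L) = 1 := by
        have hle : Module.finrank ℝ (LinearMap.range L) ≤ 1 := by
          simpa using Submodule.finrank_le (LinearMap.range L)
        have hne : LinearMap.range L ≠ ⊥ := by
          simp only [ne_eq, LinearMap.range_eq_bot]; exact hLne
        have h0 : Module.finrank ℝ (LinearMap.range L) ≠ 0 := by
          simp only [ne_eq, Submodule.finrank_eq_zero]; exact hne
        omega
      have := LinearMap.finrank_range_add_finrank_ker L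
      rw [hr, hdim] at this
      omega
    have hcard : Fintype.card ι ≤ Fintype.card Θ * Fintype.card A := by
      have hc : Fintype.card ι = (Fintype.card ι - 1) + 1 :=
        (Nat.succ_pred_eq_of_pos (Fintype.card_pos (α := ι))).symm
      have hvs' : Module.finrank ℝ (vectorSpan ℝ (Set.range z)) = Fintype.card ι - 1 :=
        hz_ai.finrank_vectorSpan hc
      have hmono : Module.finrank ℝ (vectorSpan ℝ (Set.range z)) ≤
          Module.finrank ℝ (LinearMap.ker L) := Submodule.finrank_mono hspan
      rw [hvs'] at hmono
      have := Fintype.card_pos (α := ι)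
      omega
    -- build the mechanism
    let e := (Fintype.equivFin ι).symm
    refine ⟨Fintype.card ι, fun φ => w (e φ), fun φ => z (e φ), hcard,
      fun φ => (hw_pos (e φ)).le, ?_, fun φ t => (hz_mem (e φ)).1 t,
      fun φ _ t ht t' => (hz_mem (e φ)).2 t ht t', ?_⟩
    · rw [Equiv.sum_comp e w]; exact hw_sum
    · intro t a
      have := congrFun (congrFun hzw t) a
      rw [← this]
      rw [Finset.sum_apply, Finset.sum_apply]
      rw [← Equiv.sum_comp e (fun i => (w i • z i) t a)]
      simp [Pi.smul_apply]
  refine ⟨Set.Subset.antisymm ?_ ?_, key⟩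
  · rintro f ⟨N, D, hd, hD0, hD1, hsimp, hIC, hfeq⟩
    set T : Finset (Fin N) := Finset.univ.filter (fun φ => 0 < D φ) with hT
    have hTsum : ∑ φ ∈ T, D φ = 1 := by
      rw [hT, Finset.sum_filter_of_ne, hD1]
      intro x _ hx
      exact (hD0 x).lt_of_ne (Ne.symm hx)
    have hmem := T.centerMass_mem_convexHull (fun i _ => hD0 i)
      (by rw [hTsum]; exact one_pos)
      (fun i hi => show hd i ∈ S from
        ⟨fun t => hsimp i t, fun t ht t' => hIC i (Finset.mem_filter.mp hi).2 t ht t'⟩)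
    have hfc : T.centerMass D hd = f := by
      rw [Finset.centerMass_eq_of_sum_1 _ _ hTsum]
      funext t a
      rw [Finset.sum_apply, Finset.sum_apply, hfeq t a]
      rw [hT]
      rw [Finset.sum_filter_of_ne]
      · simp
      · intro x _ hx
        refine (hD0 x).lt_of_ne fun h0 => hx ?_
        simp [Pi.smul_apply, ← h0]
    rw [← hfc]
    exact hmem
  · intro f hf
    obtain ⟨N, D, hd, _, h2, h3, h4, h5, h6⟩ := key f hf
    exact ⟨N, D, hd, h2, h3, h4, h5, h6⟩
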